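/- If ρ ∈ M satisfies c(ρ) = 1, then the operator δ'(u) = e^α·(δ(u) − u) is the ρ-conjugate of δ: for every u ∈ ℤ[M], e^α·(δ(u) − u) = e^ρ·δ(e^{−ρ}·u). (This is the rank-one case of the identity ∂'_w = e^ρ ∂_w e^{−ρ}.) -/

import Mathlib

open AddMonoidAlgebra

noncomputable section

/-- The reflection `λ ↦ λ - c(λ) • α` associated to a root `α` and coroot `c`,
as an additive homomorphism of the weight lattice `M`. -/
def demazureReflection {M : Type*} [AddCommGroup M] (α : M) (c : M →+ ℤ) : M →+ M where
  toFun := fun lam => lam - c lam • α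
  map_zero' := by simp
  map_add' := fun x y => by simp only [map_add, add_smul]; abel

/-- The ring endomorphism of the group algebra `ℤ[M]` induced by the reflection
`s(λ) = λ - c(λ)·α`; it sends `e^λ` to `e^{s(λ)}`. -/
def demazureReflectionAlg {M : Type*} [AddCommGroup M] (α : M) (c : M →+ ℤ) :
    AddMonoidAlgebra ℤ M →+* AddMonoidAlgebra ℤ M :=
  mapDomainRingHom ℤ (demazureReflection α c)
/-- If c(ρ) = 1 then δ'(u) = e^α (δ(u) - u) equals the ρ-conjugate e^ρ δ(e^{-ρ} u). -/
theorem demazure_prime_rho_conjugate {M : Type*} [AddCommGroup M]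
    [Module.Free ℤ M] [Module.Finite ℤ M]
    (α : M) (hα : α ≠ 0) (c : M →+ ℤ) (hc : c α = 2)
    (δ : AddMonoidAlgebra ℤ M →ₗ[ℤ] AddMonoidAlgebra ℤ M)
    (hδ : ∀ u : AddMonoidAlgebra ℤ M,
      (1 - single (-α) 1) * δ u = u - single (-α) 1 * demazureReflectionAlg α c u)
    (ρ : M) (hρ : c ρ = 1) :
    ∀ u : AddMonoidAlgebra ℤ M,
      single α 1 * (δ u - u) = single ρ 1 * δ (single (-ρ) 1 * u) := by

  intro u
  haveI : TwoUniqueSums M :=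
    TwoUniqueSums.of_injective_addHom _ (Module.Free.chooseBasis ℤ M).repr.injective
      inferInstance
  set S := demazureReflectionAlg α c with hS
  -- `1 - e^{-α}` is nonzero
  have hne : (1 : AddMonoidAlgebra ℤ M) - single (-α) 1 ≠ 0 := by
    intro h
    rw [sub_eq_zero, AddMonoidAlgebra.one_def] at h
    have h' := (AddMonoidAlgebra.single_left_inj one_ne_zero).mp h
    exact hα (neg_eq_zero.mp h'.symm)
  apply mul_left_cancel₀ hne
  have h1 := hδ u
  have h2 := hδ (single (-ρ) 1 * u)
  have hSr : S (single (-ρ) 1 * u) = single (α - ρ) 1 * S u := by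
    rw [map_mul]
    congr 1
    have : S (single (-ρ) 1) = single (demazureReflection α c (-ρ)) 1 := by
      show AddMonoidAlgebra.mapDomain (demazureReflection α c) (single (-ρ) 1) = _
      exact AddMonoidAlgebra.mapDomain_single
    rw [this]
    congr 1
    show -ρ - c (-ρ) • α = α - ρ
    simp [hρ]
    abel
  rw [hSr] at h2
  have e1 : single α (1 : ℤ) * single (-α) 1 = 1 := by
    rw [single_mul_single]; simp [AddMonoidAlgebra.one_def]
  have e2 : single ρ (1 : ℤ) * single (-ρ) 1 = 1 := by
    rw [single_mul_single]; simp [AddMonoidAlgebra.one_def]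
  have e3 : single ρ (1 : ℤ) * (single (-α) 1 * single (α - ρ) 1) = 1 := by
    rw [single_mul_single, single_mul_single, show ρ + (-α + (α - ρ)) = (0 : M) by abel]
    simp [AddMonoidAlgebra.one_def]
  linear_combination (single α (1 : ℤ) : AddMonoidAlgebra ℤ M) * h1
    - (single ρ (1 : ℤ) : AddMonoidAlgebra ℤ M) * h2
    + u * e1 - (S u) * e1 - u * e2 + (S u) * e3
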